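/- Let f : F_2^N → {0,1} be a monotone Boolean function with E[f] = 2^{−k} (under the uniform measure) such that f̂(S) = 0 for every S ⊆ [N] with |S| > k. Then f is a k-umvirate: there exists a set T of k coordinates such that f(x) = 1 if and only if x_i = 1 for all i ∈ T. -/

import Mathlib

open Finset

/-- The Fourier coefficient `f̂(S) = E_X [f(X) (-1)^{|S ∩ X|}]` of a function on subsets of
`[N]`, under the uniform measure. -/
noncomputable def walshCoeff {N : ℕ} (f : Finset (Fin N) → ℝ) (S : Finset (Fin N)) : ℝ :=
  (∑ X : Finset (Fin N), f X * (-1) ^ (S ∩ X).card) / 2 ^ N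

namespace Friedgut
variable {N : ℕ}

lemma pow_card_inter (S X : Finset (Fin N)) :
    ((-1 : ℝ)) ^ (S ∩ X).card = ∏ i ∈ S, (if i ∈ X then (-1 : ℝ) else 1) := by
  rw [Finset.prod_ite_mem, Finset.prod_const]

lemma sum_prod_subsets (ε : Fin N → ℝ) :
    ∑ S : Finset (Fin N), ∏ i ∈ S, ε i = ∏ i : Fin N, (1 + ε i) := by
  have h := Finset.prod_add ε (fun _ => (1:ℝ)) (univ : Finset (Fin N))
  simp only [Finset.prod_const_one, mul_one] at h
  rw [Finset.powerset_univ] at h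
  rw [← h]
  exact Finset.prod_congr rfl fun i _ => add_comm _ _

lemma inner_sum (T S : Finset (Fin N)) :
    ∑ R ∈ T.powerset, (-1 : ℝ) ^ (T \ R).card * (-1) ^ (R ∩ S).card
      = if T ⊆ S then (-2 : ℝ) ^ T.card else 0 := by
  have h := Finset.prod_add (fun i : Fin N => if i ∈ S then (-1 : ℝ) else 1)
      (fun _ => (-1 : ℝ)) T
  have lhs : ∑ R ∈ T.powerset, (-1 : ℝ) ^ (T \ R).card * (-1) ^ (R ∩ S).card
      = ∏ i ∈ T, ((if i ∈ S then (-1 : ℝ) else 1) + -1) := by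
    rw [h]
    refine Finset.sum_congr rfl fun R _ => ?_
    rw [← pow_card_inter, Finset.prod_const, mul_comm]
  rw [lhs]
  by_cases hTS : T ⊆ S
  · rw [if_pos hTS, ← Finset.prod_const]
    refine Finset.prod_congr rfl fun i hi => ?_
    rw [if_pos (hTS hi)]; norm_num
  · rw [if_neg hTS]
    obtain ⟨i, hiT, hiS⟩ := Finset.not_subset.mp hTS
    exact Finset.prod_eq_zero hiT (by rw [if_neg hiS]; norm_num)

lemma orth (X Y : Finset (Fin N)) :
    ∑ S : Finset (Fin N), (-1 : ℝ) ^ (S ∩ X).card * (-1) ^ (S ∩ Y).card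
      = if X = Y then (2:ℝ) ^ N else 0 := by
  have : ∀ S : Finset (Fin N), (-1 : ℝ) ^ (S ∩ X).card * (-1) ^ (S ∩ Y).card
      = ∏ i ∈ S, ((if i ∈ X then (-1:ℝ) else 1) * (if i ∈ Y then (-1:ℝ) else 1)) := by
    intro S
    rw [pow_card_inter, pow_card_inter, ← Finset.prod_mul_distrib]
  simp only [this]
  rw [sum_prod_subsets]
  by_cases hXY : X = Y
  · subst hXY
    rw [if_pos rfl]
    have : ∀ i : Fin N, (1:ℝ) + (if i ∈ X then (-1:ℝ) else 1) * (if i ∈ X then (-1:ℝ) else 1) = 2 := by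
      intro i; by_cases h : i ∈ X <;> simp [h] <;> norm_num
    simp only [this]
    simp [Finset.prod_const]
  · rw [if_neg hXY]
    have : ∃ i : Fin N, ¬(i ∈ X ↔ i ∈ Y) := by
      by_contra hc
      push_neg at hc
      exact hXY (Finset.ext fun i => (hc i))
    obtain ⟨i, hi⟩ := this
    refine Finset.prod_eq_zero (Finset.mem_univ i) ?_
    by_cases hx : i ∈ X <;> by_cases hy : i ∈ Y
    · exact absurd (iff_of_true hx hy) hi
    · simp [hx, hy]
    · simp [hx, hy]
    · exact absurd (iff_of_false hx hy) hi

lemma inversion (f : Finset (Fin N) → ℝ) (X : Finset (Fin N)) :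
    ∑ S : Finset (Fin N), walshCoeff f S * (-1) ^ (S ∩ X).card = f X := by
  unfold walshCoeff
  simp only [div_mul_eq_mul_div, Finset.sum_mul, ← Finset.sum_div]
  rw [Finset.sum_comm]
  have : ∀ Y : Finset (Fin N),
      ∑ S : Finset (Fin N), f Y * (-1:ℝ) ^ (S ∩ Y).card * (-1) ^ (S ∩ X).card
        = f Y * if Y = X then (2:ℝ)^N else 0 := by
    intro Y
    rw [← orth Y X, Finset.mul_sum]
    exact Finset.sum_congr rfl fun S _ => by ring
  simp only [this, mul_ite, mul_zero]
  rw [Finset.sum_ite_eq' Finset.univ X (fun Y => f Y * (2:ℝ)^N)]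
  simp only [Finset.mem_univ, if_true]
  field_simp

lemma derivative_const (f : Finset (Fin N) → ℝ) (T : Finset (Fin N))
    (hmax : ∀ S : Finset (Fin N), T ⊆ S → S ≠ T → walshCoeff f S = 0)
    (X : Finset (Fin N)) :
    ∑ R ∈ T.powerset, (-1 : ℝ) ^ (T \ R).card * f ((X \ T) ∪ R)
      = (-2 : ℝ) ^ T.card * walshCoeff f T := by
  have hsplit : ∀ R ∈ T.powerset, ∀ S : Finset (Fin N),
      ((-1:ℝ)) ^ (S ∩ ((X \ T) ∪ R)).card
        = (-1:ℝ) ^ (S ∩ (X \ T)).card * (-1:ℝ) ^ (R ∩ S).card := by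
    intro R hR S
    rw [Finset.mem_powerset] at hR
    rw [← pow_add]
    congr 1
    rw [Finset.inter_union_distrib_left, Finset.inter_comm R S,
      Finset.card_union_of_disjoint]
    exact Finset.disjoint_left.mpr fun a ha hb =>
      (Finset.mem_sdiff.mp (Finset.mem_of_mem_inter_right ha)).2
        (hR (Finset.mem_of_mem_inter_right hb))
  calc ∑ R ∈ T.powerset, (-1 : ℝ) ^ (T \ R).card * f ((X \ T) ∪ R)
      = ∑ R ∈ T.powerset, (-1 : ℝ) ^ (T \ R).card *
          ∑ S : Finset (Fin N), walshCoeff f S * (-1) ^ (S ∩ ((X \ T) ∪ R)).card := by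
        refine Finset.sum_congr rfl fun R hR => by rw [inversion]
    _ = ∑ R ∈ T.powerset, ∑ S : Finset (Fin N),
          walshCoeff f S * (-1:ℝ) ^ (S ∩ (X \ T)).card *
            ((-1 : ℝ) ^ (T \ R).card * (-1) ^ (R ∩ S).card) := by
        refine Finset.sum_congr rfl fun R hR => ?_
        rw [Finset.mul_sum]
        refine Finset.sum_congr rfl fun S _ => ?_
        rw [hsplit R hR S]; ring
    _ = ∑ S : Finset (Fin N), walshCoeff f S * (-1:ℝ) ^ (S ∩ (X \ T)).card *
          ∑ R ∈ T.powerset, (-1 : ℝ) ^ (T \ R).card * (-1) ^ (R ∩ S).card := by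
        rw [Finset.sum_comm]
        exact Finset.sum_congr rfl fun S _ => (Finset.mul_sum _ _ _).symm
    _ = ∑ S : Finset (Fin N), walshCoeff f S * (-1:ℝ) ^ (S ∩ (X \ T)).card *
          (if T ⊆ S then (-2:ℝ) ^ T.card else 0) := by
        simp only [inner_sum]
    _ = (-2 : ℝ) ^ T.card * walshCoeff f T := by
        rw [Finset.sum_eq_single T]
        · rw [if_pos (Finset.Subset.refl T)]
          rw [Finset.inter_sdiff_self T X]
          simp [mul_comm]
        · intro S _ hS
          by_cases hTS : T ⊆ S
          · rw [hmax S hTS hS]; ring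
          · rw [if_neg hTS]; ring
        · intro h; exact absurd (Finset.mem_univ T) h

lemma fiber_card (T Y : Finset (Fin N)) (hY : Y ∈ Tᶜ.powerset) :
    (Finset.univ.filter (fun X : Finset (Fin N) => X \ T = Y)).card = 2 ^ T.card := by
  rw [Finset.mem_powerset] at hY
  have hYT : Y \ T = Y := by
    rw [Finset.sdiff_eq_self_iff_disjoint]
    exact Finset.disjoint_left.mpr fun a ha hb => by
      have := hY ha; simp at this; exact this hb
  rw [← Finset.card_powerset T]
  refine Finset.card_nbij' (fun X => X ∩ T) (fun W => Y ∪ W) ?_ ?_ ?_ ?_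
  · intro X hX
    simp [Finset.mem_powerset]
  · intro W hW
    rw [Finset.mem_coe, Finset.mem_powerset] at hW
    simp only [Finset.mem_coe, Finset.mem_filter, Finset.mem_univ, true_and]
    rw [Finset.union_sdiff_distrib, hYT, Finset.sdiff_eq_empty_iff_subset.mpr hW,
      Finset.union_empty]
  · intro X hX
    simp only [Finset.mem_coe, Finset.mem_filter, Finset.mem_univ, true_and] at hX
    show Y ∪ X ∩ T = X
    rw [← hX, Finset.sdiff_union_inter]
  · intro W hW
    rw [Finset.mem_coe, Finset.mem_powerset] at hW
    show (Y ∪ W) ∩ T = W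
    rw [Finset.union_inter_distrib_right]
    have h1 : Y ∩ T = ∅ := by
      rw [← hYT]; exact Finset.sdiff_inter_self _ _
    rw [h1, Finset.empty_union, Finset.inter_eq_left.mpr hW]

lemma sum_fiber (T : Finset (Fin N)) (g : Finset (Fin N) → ℝ) :
    ∑ X : Finset (Fin N), g (X \ T) = 2 ^ T.card * ∑ Y ∈ Tᶜ.powerset, g Y := by
  classical
  rw [← Finset.sum_fiberwise_of_maps_to
    (g := fun X : Finset (Fin N) => X \ T) (t := Tᶜ.powerset)
    (fun X _ => by
      rw [Finset.mem_powerset]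
      intro a ha
      simp only [Finset.mem_compl]
      exact (Finset.mem_sdiff.mp ha).2) (fun X => g (X \ T))]
  rw [Finset.mul_sum]
  refine Finset.sum_congr rfl fun Y hY => ?_
  have : ∀ X ∈ Finset.univ.filter (fun X : Finset (Fin N) => X \ T = Y),
      g (X \ T) = g Y := by
    intro X hX
    simp only [Finset.mem_filter] at hX
    rw [hX.2]
  rw [Finset.sum_congr rfl this, Finset.sum_const, fiber_card T Y hY,
    nsmul_eq_mul]
  push_cast
  ring

lemma sum_union_powerset (T : Finset (Fin N)) (f : Finset (Fin N) → ℝ) :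
    ∑ R ∈ T.powerset, ∑ Y ∈ Tᶜ.powerset, f (Y ∪ R) = ∑ Z : Finset (Fin N), f Z := by
  rw [← Finset.sum_product']
  refine Finset.sum_nbij' (fun p => p.2 ∪ p.1) (fun Z => (Z ∩ T, Z \ T)) ?_ ?_ ?_ ?_ ?_
  · intro p _; exact Finset.mem_univ _
  · intro Z _
    rw [Finset.mem_product]
    constructor
    · rw [Finset.mem_powerset]; exact Finset.inter_subset_right
    · rw [Finset.mem_powerset]
      intro a ha
      simp only [Finset.mem_compl]
      exact (Finset.mem_sdiff.mp ha).2
  · intro p hp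
    rw [Finset.mem_product, Finset.mem_powerset, Finset.mem_powerset] at hp
    obtain ⟨h1, h2⟩ := hp
    have hd : p.2 ∩ T = ∅ := by
      ext a
      simp only [Finset.mem_inter, Finset.notMem_empty, iff_false, not_and]
      intro ha hb
      have := h2 ha
      simp only [Finset.mem_compl] at this
      exact this hb
    ext1
    · simp only
      rw [Finset.union_inter_distrib_right, hd, Finset.empty_union,
        Finset.inter_eq_left.mpr h1]
    · simp only
      rw [Finset.union_sdiff_distrib, Finset.sdiff_eq_empty_iff_subset.mpr h1,
        Finset.union_empty, Finset.sdiff_eq_self_iff_disjoint.mpr]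
      exact Finset.disjoint_left.mpr fun a ha hb => by
        have := h2 ha; simp only [Finset.mem_compl] at this; exact this hb
  · intro Z _
    simp only
    rw [Finset.sdiff_union_inter]
  · intro p _; rfl

end Friedgut

open Friedgut in
/-- Friedgut's lemma (p = 1/2): a monotone Boolean function `f` with `E[f] = 2^{-k}` whose
Fourier coefficients vanish above level `k` is a `k`-umvirate. -/
theorem friedgut_umvirate {N k : ℕ} (f : Finset (Fin N) → ℝ)
    (hbool : ∀ X, f X = 0 ∨ f X = 1)
    (hmono : ∀ X Y : Finset (Fin N), X ⊆ Y → f X ≤ f Y)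
    (hexp : (∑ X : Finset (Fin N), f X) / 2 ^ N = (2 : ℝ)⁻¹ ^ k)
    (hfourier : ∀ S : Finset (Fin N), k < S.card → walshCoeff f S = 0) :
    ∃ T : Finset (Fin N), T.card = k ∧ ∀ X, (f X = 1 ↔ T ⊆ X) := by
  classical
  set A : ℝ := 2 ^ N * (2 : ℝ)⁻¹ ^ k with hA
  have hApos : 0 < A := by positivity
  have hf0 : ∀ X, 0 ≤ f X := fun X => by rcases hbool X with h | h <;> rw [h] <;> norm_num
  have hf1 : ∀ X, f X ≤ 1 := fun X => by rcases hbool X with h | h <;> rw [h] <;> norm_num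
  have hsum : ∑ X : Finset (Fin N), f X = A := by
    rw [div_eq_iff (by positivity : (2:ℝ)^N ≠ 0)] at hexp
    rw [hexp, hA]; ring
  have hw0 : walshCoeff f ∅ = (2 : ℝ)⁻¹ ^ k := by
    unfold walshCoeff
    simp only [Finset.empty_inter, Finset.card_empty, pow_zero, mul_one]
    exact hexp
  -- pick T of maximal cardinality with nonzero coefficient
  set P : Finset (Finset (Fin N)) :=
    Finset.univ.filter (fun S => walshCoeff f S ≠ 0) with hP
  have hPne : P.Nonempty := ⟨∅, by
    simp only [hP, Finset.mem_filter, Finset.mem_univ, true_and, hw0]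
    positivity⟩
  obtain ⟨T, hTP, hTmax⟩ := Finset.exists_max_image P Finset.card hPne
  have hwT : walshCoeff f T ≠ 0 := (Finset.mem_filter.mp hTP).2
  have hmax : ∀ S : Finset (Fin N), T ⊆ S → S ≠ T → walshCoeff f S = 0 := by
    intro S hsub hne
    by_contra h
    have hSP : S ∈ P := by simp [hP, h]
    have hle := hTmax S hSP
    have hlt : T.card < S.card :=
      Finset.card_lt_card (lt_of_le_of_ne hsub (Ne.symm hne))
    omega
  have hTk : T.card ≤ k := by
    by_contra h
    exact hwT (hfourier T (by omega))
  have hkN : T.card ≤ N := by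
    have := Finset.card_le_univ T
    simpa using this
  set c : ℝ := (-2 : ℝ) ^ T.card * walshCoeff f T with hc
  have hD := derivative_const f T hmax
  -- c is a nonzero integer
  have hcint : ∃ z : ℤ, (z : ℝ) = c := by
    refine ⟨∑ R ∈ T.powerset, (-1) ^ (T \ R).card * (if f R = 1 then 1 else 0), ?_⟩
    rw [hc, ← hD ∅]
    push_cast
    refine Finset.sum_congr rfl fun R _ => ?_
    rw [Finset.empty_sdiff, Finset.empty_union]
    rcases hbool R with h | h
    · rw [h]; norm_num
    · rw [h]; norm_num
  have hcne : c ≠ 0 := by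
    simp only [hc, mul_ne_zero_iff]
    exact ⟨pow_ne_zero _ (by norm_num), hwT⟩
  have hc1 : 1 ≤ |c| := by
    obtain ⟨z, hz⟩ := hcint
    have hzne : z ≠ 0 := by
      rintro rfl
      rw [Int.cast_zero] at hz
      exact hcne hz.symm
    have h1 : (1:ℤ) ≤ |z| := Int.one_le_abs hzne
    calc (1:ℝ) ≤ |(z:ℝ)| := by rw [← Int.cast_abs]; exact_mod_cast h1
      _ = |c| := by rw [hz]
  have habsw : |walshCoeff f T| ≤ (2 : ℝ)⁻¹ ^ k := by
    rw [← hexp]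
    unfold walshCoeff
    rw [abs_div, abs_of_pos (by positivity : (0:ℝ) < 2 ^ N)]
    gcongr
    calc |∑ X : Finset (Fin N), f X * (-1) ^ (T ∩ X).card|
        ≤ ∑ X : Finset (Fin N), |f X * (-1) ^ (T ∩ X).card| :=
          Finset.abs_sum_le_sum_abs _ _
      _ = ∑ X : Finset (Fin N), f X := by
          refine Finset.sum_congr rfl fun X _ => ?_
          rw [abs_mul, abs_pow, abs_neg, abs_one, one_pow, mul_one,
            abs_of_nonneg (hf0 X)]
  have hcabs : |c| = 2 ^ T.card * |walshCoeff f T| := by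
    rw [hc, abs_mul, abs_pow, abs_neg]
    norm_num
  -- conclude T.card = k
  have hkT : k ≤ T.card := by
    have h1 : (1:ℝ) ≤ 2 ^ T.card * (2:ℝ)⁻¹ ^ k := le_trans hc1 (by
      rw [hcabs]; gcongr)
    have h2 : (2:ℝ) ^ k ≤ 2 ^ T.card := by
      rw [inv_pow, ← div_eq_mul_inv, le_div_iff₀ (by positivity : (0:ℝ) < 2 ^ k),
        one_mul] at h1
      exact h1
    exact (pow_le_pow_iff_right₀ (by norm_num : (1:ℝ) < 2)).mp h2
  have hTcard : T.card = k := le_antisymm hTk hkT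
  have hcabs1 : |c| = 1 := by
    refine le_antisymm ?_ hc1
    rw [hcabs, hTcard]
    calc (2:ℝ) ^ k * |walshCoeff f T| ≤ 2 ^ k * (2:ℝ)⁻¹ ^ k := by gcongr
      _ = 1 := by rw [← mul_pow]; norm_num
  -- the conditional sums
  set m : Finset (Fin N) → ℝ := fun R => ∑ Y ∈ Tᶜ.powerset, f (Y ∪ R) with hm
  have hm0 : ∀ R, 0 ≤ m R := fun R => Finset.sum_nonneg fun Y _ => hf0 _
  have hmmono : ∀ R R' : Finset (Fin N), R ⊆ R' → m R ≤ m R' := by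
    intro R R' hsub
    exact Finset.sum_le_sum fun Y _ => hmono _ _ (Finset.union_subset_union_right hsub)
  have hma : ∑ R ∈ T.powerset, m R = A := by
    rw [hm]
    simp only
    rw [sum_union_powerset T f, hsum]
  have hmb : ∑ R ∈ T.powerset, (-1:ℝ) ^ (T \ R).card * m R = A * c := by
    have key : (2:ℝ) ^ T.card * ∑ R ∈ T.powerset, (-1:ℝ) ^ (T \ R).card * m R
        = 2 ^ N * c := by
      calc (2:ℝ) ^ T.card * ∑ R ∈ T.powerset, (-1:ℝ) ^ (T \ R).card * m R
          = ∑ R ∈ T.powerset, (-1:ℝ) ^ (T \ R).card * (2 ^ T.card * m R) := by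
            rw [Finset.mul_sum]; exact Finset.sum_congr rfl fun R _ => by ring
        _ = ∑ R ∈ T.powerset, (-1:ℝ) ^ (T \ R).card *
              ∑ X : Finset (Fin N), f ((X \ T) ∪ R) := by
            refine Finset.sum_congr rfl fun R _ => ?_
            rw [sum_fiber T (fun Y => f (Y ∪ R))]
        _ = ∑ R ∈ T.powerset, ∑ X : Finset (Fin N),
              (-1:ℝ) ^ (T \ R).card * f ((X \ T) ∪ R) := by
            exact Finset.sum_congr rfl fun R _ => Finset.mul_sum _ _ _
        _ = ∑ X : Finset (Fin N), ∑ R ∈ T.powerset,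
              (-1:ℝ) ^ (T \ R).card * f ((X \ T) ∪ R) := Finset.sum_comm
        _ = ∑ _X : Finset (Fin N), c := Finset.sum_congr rfl fun X _ => hD X
        _ = 2 ^ N * c := by
            rw [Finset.sum_const, Finset.card_univ, Fintype.card_finset,
              Fintype.card_fin, nsmul_eq_mul]
            push_cast
            ring
    rw [hTcard] at key
    have h2k : (2:ℝ) ^ k ≠ 0 := by positivity
    refine mul_left_cancel₀ h2k ?_
    rw [key, hA, inv_pow]
    field_simp
  have hkN' : k ≤ N := hTcard ▸ hkN
  have hcpm : c = 1 ∨ c = -1 := (abs_eq (by norm_num : (0:ℝ) ≤ 1)).mp hcabs1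
  have herase : ∀ t ∈ T, T \ T.erase t = {t} := by
    intro t ht
    ext a
    simp only [Finset.mem_sdiff, Finset.mem_erase, Finset.mem_singleton]
    constructor
    · rintro ⟨haT, h⟩
      by_contra hne
      exact h ⟨hne, haT⟩
    · rintro rfl
      exact ⟨ht, fun h => h.1 rfl⟩
  have hmemXT : ∀ X : Finset (Fin N), X \ T ∈ Tᶜ.powerset := fun X =>
    Finset.mem_powerset.mpr fun a ha =>
      Finset.mem_compl.mpr (Finset.mem_sdiff.mp ha).2
  rcases hcpm with hcp | hcm
  · -- c = 1
    have hz : ∀ R ∈ T.powerset, ((1:ℝ) - (-1) ^ (T \ R).card) * m R = 0 := by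
      have hsz : ∑ R ∈ T.powerset, ((1:ℝ) - (-1) ^ (T \ R).card) * m R = 0 := by
        have hsplit : ∑ R ∈ T.powerset, ((1:ℝ) - (-1) ^ (T \ R).card) * m R
            = (∑ R ∈ T.powerset, m R)
              - ∑ R ∈ T.powerset, (-1:ℝ) ^ (T \ R).card * m R := by
          rw [← Finset.sum_sub_distrib]
          exact Finset.sum_congr rfl fun R _ => by ring
        rw [hsplit, hma, hmb, hcp]; ring
      have hnn : ∀ R ∈ T.powerset, 0 ≤ ((1:ℝ) - (-1) ^ (T \ R).card) * m R := by
        intro R _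
        apply mul_nonneg _ (hm0 R)
        rcases Nat.even_or_odd (T \ R).card with he | ho
        · rw [he.neg_one_pow]; norm_num
        · rw [ho.neg_one_pow]; norm_num
      exact (Finset.sum_eq_zero_iff_of_nonneg hnn).mp hsz
    have hmzero : ∀ t ∈ T, m (T.erase t) = 0 := by
      intro t ht
      have hmem : T.erase t ∈ T.powerset :=
        Finset.mem_powerset.mpr (Finset.erase_subset _ _)
      have h := hz _ hmem
      rw [herase t ht, Finset.card_singleton, pow_one] at h
      norm_num at h
      exact h
    have hRzero : ∀ R ∈ T.powerset, R ≠ T → m R = 0 := by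
      intro R hR hne
      rw [Finset.mem_powerset] at hR
      have hTR : (T \ R).Nonempty := by
        rw [Finset.sdiff_nonempty]
        intro hsub
        exact hne (Finset.Subset.antisymm hR hsub)
      obtain ⟨t, htT⟩ := hTR
      rw [Finset.mem_sdiff] at htT
      have hsub : R ⊆ T.erase t := fun a ha =>
        Finset.mem_erase.mpr ⟨fun h => htT.2 (h ▸ ha), hR ha⟩
      exact le_antisymm
        (le_trans (hmmono R _ hsub) (le_of_eq (hmzero t htT.1))) (hm0 R)
    have hmT : m T = A := by
      rw [← hma]
      exact (Finset.sum_eq_single T (fun R hR hne => hRzero R hR hne)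
        (fun h => absurd (Finset.mem_powerset.mpr (Finset.Subset.refl T)) h)).symm
    have hcardp : ((Tᶜ.powerset.card : ℕ) : ℝ) = A := by
      rw [Finset.card_powerset, Finset.card_compl, Fintype.card_fin, hTcard, hA]
      push_cast
      rw [inv_pow]
      field_simp
      rw [← pow_add, Nat.sub_add_cancel hkN']
    have hone : ∀ Y ∈ Tᶜ.powerset, f (Y ∪ T) = 1 := by
      have hsz : ∑ Y ∈ Tᶜ.powerset, ((1:ℝ) - f (Y ∪ T)) = 0 := by
        rw [Finset.sum_sub_distrib, Finset.sum_const, nsmul_eq_mul, mul_one]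
        have hmTdef : ∑ Y ∈ Tᶜ.powerset, f (Y ∪ T) = m T := rfl
        rw [hmTdef, hmT, hcardp]
        ring
      have hnn : ∀ Y ∈ Tᶜ.powerset, 0 ≤ (1:ℝ) - f (Y ∪ T) := fun Y _ => by
        linarith [hf1 (Y ∪ T)]
      intro Y hY
      have := (Finset.sum_eq_zero_iff_of_nonneg hnn).mp hsz Y hY
      linarith
    refine ⟨T, hTcard, fun X => ⟨?_, ?_⟩⟩
    · intro hfX
      by_contra hTX
      obtain ⟨t, htT, htX⟩ := Finset.not_subset.mp hTX
      have h0 : f ((X \ T) ∪ T.erase t) = 0 :=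
        (Finset.sum_eq_zero_iff_of_nonneg (fun Y _ => hf0 _)).mp
          (hmzero t htT) (X \ T) (hmemXT X)
      have hsub : X ⊆ (X \ T) ∪ T.erase t := by
        intro a ha
        by_cases haT : a ∈ T
        · exact Finset.mem_union_right _
            (Finset.mem_erase.mpr ⟨fun h => htX (h ▸ ha), haT⟩)
        · exact Finset.mem_union_left _ (Finset.mem_sdiff.mpr ⟨ha, haT⟩)
      have hle := hmono X _ hsub
      rw [h0, hfX] at hle
      linarith
    · intro hTX
      have h1 := hone (X \ T) (hmemXT X)
      rwa [Finset.sdiff_union_of_subset hTX] at h1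
  · -- c = -1 : impossible
    exfalso
    have hsz : ∑ R ∈ T.powerset, ((1:ℝ) + (-1) ^ (T \ R).card) * m R = 0 := by
      have hsplit : ∑ R ∈ T.powerset, ((1:ℝ) + (-1) ^ (T \ R).card) * m R
          = (∑ R ∈ T.powerset, m R)
            + ∑ R ∈ T.powerset, (-1:ℝ) ^ (T \ R).card * m R := by
        rw [← Finset.sum_add_distrib]
        exact Finset.sum_congr rfl fun R _ => by ring
      rw [hsplit, hma, hmb, hcm]; ring
    have hnn : ∀ R ∈ T.powerset, 0 ≤ ((1:ℝ) + (-1) ^ (T \ R).card) * m R := by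
      intro R _
      apply mul_nonneg _ (hm0 R)
      rcases Nat.even_or_odd (T \ R).card with he | ho
      · rw [he.neg_one_pow]; norm_num
      · rw [ho.neg_one_pow]; norm_num
    have hTz := (Finset.sum_eq_zero_iff_of_nonneg hnn).mp hsz T
      (Finset.mem_powerset.mpr (Finset.Subset.refl T))
    rw [Finset.sdiff_self, Finset.card_empty, pow_zero] at hTz
    norm_num at hTz
    have hzero : ∀ Z : Finset (Fin N), f Z = 0 := by
      intro Z
      have h0 : f ((Z \ T) ∪ T) = 0 :=
        (Finset.sum_eq_zero_iff_of_nonneg (fun Y _ => hf0 _)).mp hTz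
          (Z \ T) (hmemXT Z)
      have hsub : Z ⊆ (Z \ T) ∪ T := by
        intro a ha
        by_cases haT : a ∈ T
        · exact Finset.mem_union_right _ haT
        · exact Finset.mem_union_left _ (Finset.mem_sdiff.mpr ⟨ha, haT⟩)
      have hle := hmono Z _ hsub
      rw [h0] at hle
      linarith [hf0 Z]
    rw [Finset.sum_congr rfl (fun X _ => hzero X), Finset.sum_const_zero] at hsum
    linarith
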